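/- Say n ≥ 2 is a down-integer if its unique decomposition n = a·f_t + b·f_{t-1} (with 1 ≤ a ≤ b ≤ f_t, t ≥ 2) has t even, and an up-integer if t is odd. If the fractional part δ_n = φ·n − ⌊φ·n⌋ satisfies δ_n < 1/(√5·φ), then n is a down-integer; and if ⌈φ·n⌉ − φ·n < 1/(√5·φ), then n is an up-integer. -/

import Mathlib

noncomputable def phi : ℝ := (1 + Real.sqrt 5) / 2

open Real goldenRatio in
/-- Uniform bound on the "error term" `x^(s+1) * (b - a*x)` where `x = -ψ`. -/
lemma stmt14_key (a b : ℝ) (s : ℕ) (ha : 1 ≤ a) (hab : a ≤ b)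
    (hb : b ≤ (Nat.fib (s + 2) : ℝ)) :
    0 < (-ψ) ^ (s + 1) * (b - a * (-ψ)) ∧
    (-ψ) ^ (s + 1) * (b - a * (-ψ)) < φ / Real.sqrt 5 := by
  set x : ℝ := -ψ with hxdef
  have hx0 : 0 < x := by rw [hxdef]; linarith [goldenConj_neg]
  have hx1 : x < 1 := by rw [hxdef]; linarith [neg_one_lt_goldenConj]
  have hs5 : (0:ℝ) < Real.sqrt 5 := by positivity
  have hmul : x * φ = 1 := by rw [hxdef, neg_mul, goldenConj_mul_goldenRatio, neg_neg]
  have hpow : 0 < x ^ (s + 1) := pow_pos hx0 _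
  constructor
  · have : 0 < b - a * x := by nlinarith
    positivity
  · have hfib : (Nat.fib (s + 2) : ℝ) = (φ ^ (s + 2) - ψ ^ (s + 2)) / Real.sqrt 5 :=
      Real.coe_fib_eq _
    have habs : -ψ ^ (s + 2) ≤ x ^ (s + 2) := by
      calc -ψ ^ (s + 2) ≤ |ψ ^ (s + 2)| := neg_le_abs _
        _ = |ψ| ^ (s + 2) := abs_pow _ _
        _ = x ^ (s + 2) := by rw [abs_of_neg goldenConj_neg]
    have hxφ : x ^ (s + 1) * φ ^ (s + 2) = φ := by
      have h1 : x ^ (s + 1) * φ ^ (s + 1) = 1 := by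
        rw [← mul_pow, hmul, one_pow]
      calc x ^ (s + 1) * φ ^ (s + 2) = (x ^ (s + 1) * φ ^ (s + 1)) * φ := by ring
        _ = φ := by rw [h1, one_mul]
    have step1 : x ^ (s + 1) * (b - a * x) ≤ x ^ (s + 1) * ((Nat.fib (s + 2) : ℝ) - x) := by
      apply mul_le_mul_of_nonneg_left _ hpow.le
      nlinarith
    have hxp2 : 0 < x ^ (s + 2) := pow_pos hx0 _
    have step2 : x ^ (s + 1) * ((Nat.fib (s + 2) : ℝ) - x) < φ / Real.sqrt 5 := by
      rw [hfib]
      have expand : x ^ (s + 1) * ((φ ^ (s + 2) - ψ ^ (s + 2)) / Real.sqrt 5 - x)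
          = (x ^ (s + 1) * φ ^ (s + 2) + x ^ (s + 1) * (-ψ ^ (s + 2))) / Real.sqrt 5
            - x ^ (s + 1) * x := by ring
      rw [expand, hxφ, ← pow_succ, add_div]
      have h2 : x ^ (s + 1) * (-ψ ^ (s + 2)) ≤ x ^ (s + 1) * x ^ (s + 2) :=
        mul_le_mul_of_nonneg_left habs hpow.le
      have h3 : x ^ (s + 1) * x ^ (s + 2) < 1 * x ^ (s + 2) := by
        apply mul_lt_mul_of_pos_right _ hxp2
        exact pow_lt_one₀ hx0.le hx1 (by omega)
      have h5 : (1:ℝ) < Real.sqrt 5 := by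
        have h : (1:ℝ) = Real.sqrt 1 := by simp
        rw [h]; exact Real.sqrt_lt_sqrt (by norm_num) (by norm_num)
      have h6 : (x ^ (s + 1) * (-ψ ^ (s + 2))) / Real.sqrt 5 < x ^ (s + 2) := by
        rw [div_lt_iff₀ hs5]
        nlinarith
      linarith
    exact step1.trans_lt step2

theorem stmt14 (n : ℤ) (hn : 2 ≤ n) (a b : ℤ) (t : ℕ) (ht : 2 ≤ t)
    (ha : 1 ≤ a) (hab : a ≤ b) (hb : b ≤ (Nat.fib t : ℤ))
    (hdec : n = a * (Nat.fib t : ℤ) + b * (Nat.fib (t - 1) : ℤ)) :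
    (phi * n - ⌊phi * (n : ℝ)⌋ < 1 / (Real.sqrt 5 * phi) → Even t) ∧
    ((⌈phi * (n : ℝ)⌉ : ℝ) - phi * n < 1 / (Real.sqrt 5 * phi) → Odd t) := by
  open Real goldenRatio in
  obtain ⟨s, rfl⟩ : ∃ s, t = s + 2 := ⟨t - 2, by omega⟩
  have htsub : s + 2 - 1 = s + 1 := by omega
  rw [htsub] at hdec
  have hphi : phi = φ := rfl
  set x : ℝ := -ψ with hxdef
  have hψx : ψ = -x := by rw [hxdef, neg_neg]
  have hx0 : 0 < x := by rw [hxdef]; linarith [goldenConj_neg]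
  have hx1 : x < 1 := by rw [hxdef]; linarith [neg_one_lt_goldenConj]
  have hs5 : (0:ℝ) < Real.sqrt 5 := by positivity
  have hmul : x * φ = 1 := by rw [hxdef, neg_mul, goldenConj_mul_goldenRatio, neg_neg]
  have k1 : φ * (Nat.fib (s + 2) : ℝ) = (Nat.fib (s + 3) : ℝ) - ψ ^ (s + 2) := by
    have := fib_succ_sub_goldenRatio_mul_fib (s + 2); push_cast at this ⊢; linarith
  have k2 : φ * (Nat.fib (s + 1) : ℝ) = (Nat.fib (s + 2) : ℝ) - ψ ^ (s + 1) := by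
    have := fib_succ_sub_goldenRatio_mul_fib (s + 1); push_cast at this ⊢; linarith
  have hdecR : (n : ℝ) = (a : ℝ) * (Nat.fib (s + 2) : ℝ) + (b : ℝ) * (Nat.fib (s + 1) : ℝ) := by
    exact_mod_cast congrArg (Int.cast : ℤ → ℝ) hdec
  set N : ℤ := a * (Nat.fib (s + 3) : ℤ) + b * (Nat.fib (s + 2) : ℤ) with hN
  have hφn : phi * (n : ℝ) = (N : ℝ) - ((a : ℝ) * ψ ^ (s + 2) + (b : ℝ) * ψ ^ (s + 1)) := by
    rw [hphi, hdecR, hN]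
    push_cast
    linear_combination (a : ℝ) * k1 + (b : ℝ) * k2
  have haR : (1:ℝ) ≤ (a : ℝ) := by exact_mod_cast ha
  have habR : (a : ℝ) ≤ (b : ℝ) := by exact_mod_cast hab
  have hbR : (b : ℝ) ≤ (Nat.fib (s + 2) : ℝ) := by exact_mod_cast hb
  obtain ⟨he0, he1⟩ := stmt14_key (a : ℝ) (b : ℝ) s haR habR hbR
  set e : ℝ := (-ψ) ^ (s + 1) * ((b : ℝ) - (a : ℝ) * (-ψ)) with he
  have hφlt : φ / Real.sqrt 5 < 1 := by
    rw [div_lt_one hs5]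
    have h5 : (2:ℝ) ≤ Real.sqrt 5 := by
      have h : (2:ℝ) = Real.sqrt 4 := by
        rw [show (4:ℝ) = 2^2 by norm_num, Real.sqrt_sq]; norm_num
      rw [h]; exact Real.sqrt_le_sqrt (by norm_num)
    linarith [goldenRatio_lt_two]
  have hbound : 1 / (Real.sqrt 5 * phi) = 1 - φ / Real.sqrt 5 := by
    rw [hphi]
    have e1 : 1 / (Real.sqrt 5 * φ) = x / Real.sqrt 5 := by
      rw [← hmul, mul_comm (Real.sqrt 5) φ, mul_comm x φ]
      exact mul_div_mul_left x (Real.sqrt 5) goldenRatio_ne_zero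
    have e2 : 1 - φ / Real.sqrt 5 = x / Real.sqrt 5 := by
      rw [eq_div_iff hs5.ne', sub_mul, one_mul, div_mul_cancel₀ _ hs5.ne']
      have := goldenRatio_sub_goldenConj
      rw [hxdef]; linarith
    rw [e1, e2]
  rcases Nat.even_or_odd s with hev | hod
  · -- t = s+2 even
    have hψ1 : ψ ^ (s + 1) = -x ^ (s + 1) := by rw [hψx, Odd.neg_pow hev.add_one]
    have hψ2 : ψ ^ (s + 2) = x ^ (s + 2) := by
      rw [hψx, Even.neg_pow (hev.add even_two)]
    have hφn' : phi * (n : ℝ) = (N : ℝ) + e := by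
      rw [hφn, hψ1, hψ2, he, hψx]; ring
    have hceil : ⌈phi * (n : ℝ)⌉ = N + 1 := by
      apply Int.ceil_eq_iff.mpr
      constructor
      · push_cast; rw [hφn']; linarith
      · push_cast; rw [hφn']; linarith
    refine ⟨fun _ => hev.add even_two, fun hlt => absurd hlt ?_⟩
    rw [hceil, hφn', hbound]
    push_cast
    intro h; linarith
  · -- t = s+2 odd
    have hψ1 : ψ ^ (s + 1) = x ^ (s + 1) := by rw [hψx, Even.neg_pow hod.add_one]
    have hψ2 : ψ ^ (s + 2) = -x ^ (s + 2) := by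
      rw [hψx, Odd.neg_pow (hod.add_even even_two)]
    have hφn' : phi * (n : ℝ) = (N : ℝ) - e := by
      rw [hφn, hψ1, hψ2, he, hψx]; ring
    have hfloor : ⌊phi * (n : ℝ)⌋ = N - 1 := by
      apply Int.floor_eq_iff.mpr
      constructor
      · push_cast; rw [hφn']; linarith
      · push_cast; rw [hφn']; linarith
    refine ⟨fun hlt => absurd hlt ?_, fun _ => hod.add_even even_two⟩
    rw [hfloor, hφn', hbound]
    push_cast
    intro h; linarith
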